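/- Suppose moreover that a ≠ 0. Then right multiplication by θ = (a, b) defines a cochain complex 0 → D(A)⁰ → D(A)¹ → D(A)² → D(A)³ → 0 (each differential is ξ ↦ ξ·θ), and the dimension over 𝔽₂ of its cohomology at D(A)¹, namely dim ker(·θ : D(A)¹ → D(A)²) − dim im(·θ : D(A)⁰ → D(A)¹), is at least 1 − dim_{𝔽₂} A¹ + dim_{𝔽₂} A² (an inequality of integers). (This is the algebraic content of Proposition 2.6: for the mod-2 cohomology ring of the boundary manifold of a projective line arrangement, dim H¹(D(A),(a,b)) ≥ χ(U).) -/

import Mathlib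

set_option maxHeartbeats 1000000


noncomputable section

/-- The action of `x : A` on a functional `f`: `(x · f) z = f (z * x)`. -/
def dAct {A : Type*} [CommRing A] [Algebra (ZMod 2) A]
    (x : A) (f : Module.Dual (ZMod 2) A) : Module.Dual (ZMod 2) A :=
  f.comp (LinearMap.mulRight (ZMod 2) x)

/-- Multiplication on the double `D(A) = A × Ā`:
`(x, f) · (y, g) = (x y, x · g + y · f)`. -/
def dMul {A : Type*} [CommRing A] [Algebra (ZMod 2) A]
    (p q : A × Module.Dual (ZMod 2) A) : A × Module.Dual (ZMod 2) A :=
  (p.1 * q.1, dAct p.1 q.2 + dAct q.1 p.2)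

/-- `Āᵏ`: the subspace of functionals vanishing on `Aⁱ` for all `i ≠ k`. -/
def dualGrade {A : Type*} [CommRing A] [Algebra (ZMod 2) A]
    (G : ℕ → Submodule (ZMod 2) A) (k : ℕ) :
    Submodule (ZMod 2) (Module.Dual (ZMod 2) A) :=
  ⨅ (i : ℕ) (_ : i ≠ k) (x : A) (_ : x ∈ G i),
    LinearMap.ker (Module.Dual.eval (ZMod 2) A x)

/-- The grading `D(A)ᵏ = Aᵏ ⊕ Ā^{3-k}` of the double (for `k ≤ 3`). -/
def doubleGrade {A : Type*} [CommRing A] [Algebra (ZMod 2) A]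
    (G : ℕ → Submodule (ZMod 2) A) (k : ℕ) :
    Submodule (ZMod 2) (A × Module.Dual (ZMod 2) A) :=
  (G k).prod (dualGrade G (3 - k))

/-- Right multiplication `ξ ↦ ξ · θ` on the double, as a linear map. -/
def rMul {A : Type*} [CommRing A] [Algebra (ZMod 2) A]
    (θ : A × Module.Dual (ZMod 2) A) :
    (A × Module.Dual (ZMod 2) A) →ₗ[ZMod 2] (A × Module.Dual (ZMod 2) A) where
  toFun ξ := dMul ξ θ
  map_add' ξ η := by
    unfold dMul dAct
    refine Prod.ext (by simp [add_mul]) ?_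
    ext z
    simp [mul_add, map_add]
    abel
  map_smul' c ξ := by
    unfold dMul dAct
    refine Prod.ext (by simp [smul_mul_assoc]) ?_
    ext z
    simp [mul_smul_comm, map_smul, smul_add]


section Aux

variable {A : Type*} [CommRing A] [Algebra (ZMod 2) A]

lemma mem_dualGrade' {G : ℕ → Submodule (ZMod 2) A} {f : Module.Dual (ZMod 2) A} {k : ℕ} :
    f ∈ dualGrade G k ↔ ∀ i, i ≠ k → ∀ x ∈ G i, f x = 0 := by
  unfold dualGrade
  simp [Submodule.mem_iInf, LinearMap.mem_ker]

lemma dAct_apply' (x : A) (f : Module.Dual (ZMod 2) A) (z : A) : dAct x f z = f (z * x) := rfl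

lemma rMul_apply' (t p : A × Module.Dual (ZMod 2) A) : rMul t p = dMul p t := rfl

end Aux

/-- Proposition 2.6 (algebraic content): if `a ≠ 0`, then right multiplication by
`θ = (a, b)` defines a cochain complex `0 → D(A)⁰ → D(A)¹ → D(A)² → D(A)³ → 0`,
and the dimension of its cohomology at `D(A)¹` is at least
`1 - dim A¹ + dim A²  (= χ(U))`. -/
theorem stmt0 {A : Type*} [CommRing A] [Algebra (ZMod 2) A] [Nontrivial A]
    [Module.Finite (ZMod 2) A]
    (G : ℕ → Submodule (ZMod 2) A)
    (hinternal : DirectSum.IsInternal G)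
    (hbot : ∀ i, 2 < i → G i = ⊥)
    (hG0 : G 0 = Submodule.span (ZMod 2) {1})
    (hmul : ∀ i j, i + j ≤ 2 → ∀ x ∈ G i, ∀ y ∈ G j, x * y ∈ G (i + j))
    (hmulzero : ∀ i j, 2 < i + j → ∀ x ∈ G i, ∀ y ∈ G j, x * y = 0)
    (a : A) (ha : a ∈ G 1) (ha2 : a * a = 0) (hane : a ≠ 0)
    (b : Module.Dual (ZMod 2) A) (hb : b ∈ dualGrade G 2) :
    (∀ k ≤ 2, ∀ ξ ∈ doubleGrade G k, rMul (a, b) ξ ∈ doubleGrade G (k + 1)) ∧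
    (∀ ξ : A × Module.Dual (ZMod 2) A, rMul (a, b) (rMul (a, b) ξ) = 0) ∧
    (Module.finrank (ZMod 2)
        ↥(doubleGrade G 1 ⊓ LinearMap.ker (rMul (a, b))) : ℤ)
      - Module.finrank (ZMod 2) ↥((doubleGrade G 0).map (rMul (a, b)))
      ≥ 1 - Module.finrank (ZMod 2) ↥(G 1) + Module.finrank (ZMod 2) ↥(G 2) := by
  classical
  haveI : Module.Finite (ZMod 2) (Module.Dual (ZMod 2) A) := Module.Finite.linearMap _ _ _ _
  haveI : FiniteDimensional (ZMod 2) (A × Module.Dual (ZMod 2) A) := by infer_instance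
  have hz2 : ∀ c : ZMod 2, c + c = 0 := by decide
  have hz1 : ∀ c : ZMod 2, c ≠ 0 → c = 1 := by decide
  -- the action lemma
  have act_mem : ∀ m n : ℕ, m ≤ n → ∀ x ∈ G m, ∀ f ∈ dualGrade G n,
      dAct x f ∈ dualGrade G (n - m) := by
    intro m n hmn x hx f hf
    rw [mem_dualGrade']
    intro i hi z hz
    rw [dAct_apply']
    by_cases h : i + m ≤ 2
    · exact mem_dualGrade'.mp hf (i + m) (by omega) _ (hmul i m h z hz x hx)
    · rw [hmulzero i m (by omega) z hz x hx, map_zero]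
  -- Part 1
  have part1 : ∀ k ≤ 2, ∀ ξ ∈ doubleGrade G k, rMul (a, b) ξ ∈ doubleGrade G (k + 1) := by
    intro k hk ξ hξ
    rw [doubleGrade, Submodule.mem_prod] at hξ
    obtain ⟨hx, hf⟩ := hξ
    rw [doubleGrade, Submodule.mem_prod]
    constructor
    · show ξ.1 * a ∈ G (k + 1)
      by_cases h : k + 1 ≤ 2
      · simpa using hmul k 1 h ξ.1 hx a ha
      · rw [hmulzero k 1 (by omega) ξ.1 hx a ha]
        exact (G (k + 1)).zero_mem
    · show dAct ξ.1 b + dAct a ξ.2 ∈ dualGrade G (3 - (k + 1))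
      have h1 : dAct ξ.1 b ∈ dualGrade G (2 - k) := act_mem k 2 hk ξ.1 hx b hb
      have h2 : dAct a ξ.2 ∈ dualGrade G (3 - k - 1) :=
        act_mem 1 (3 - k) (by omega) a ha ξ.2 hf
      have e1 : (2 : ℕ) - k = 3 - (k + 1) := by omega
      have e2 : (3 : ℕ) - k - 1 = 3 - (k + 1) := by omega
      rw [e1] at h1
      rw [e2] at h2
      exact Submodule.add_mem _ h1 h2
  -- Part 2
  have part2 : ∀ ξ : A × Module.Dual (ZMod 2) A, rMul (a, b) (rMul (a, b) ξ) = 0 := by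
    intro ξ
    refine Prod.ext ?_ ?_
    · show ξ.1 * a * a = 0
      rw [mul_assoc, ha2, mul_zero]
    · show dAct (ξ.1 * a) b + dAct a (dAct ξ.1 b + dAct a ξ.2) = 0
      ext z
      have e1 : z * (ξ.1 * a) = z * a * ξ.1 := by ring
      have e2 : z * a * a = 0 := by rw [mul_assoc, ha2, mul_zero]
      simp only [LinearMap.add_apply, dAct_apply', LinearMap.zero_apply]
      rw [e1, e2, map_zero, add_zero]
      exact hz2 _
  refine ⟨part1, part2, ?_⟩
  -- Part 3
  have hsup : ⨆ i, G i = ⊤ := hinternal.submodule_iSup_eq_top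
  have hindep := hinternal.submodule_iSupIndep
  -- the multiplication-by-a map on G 1
  set μ : ↥(G 1) →ₗ[ZMod 2] A := (LinearMap.mulRight (ZMod 2) a).comp (G 1).subtype with hμdef
  have hμ_apply : ∀ x (hx : x ∈ G 1), μ ⟨x, hx⟩ = x * a := fun x hx => rfl
  have hμa : μ ⟨a, ha⟩ = 0 := by rw [hμ_apply a ha, ha2]
  have hkerμ : 1 ≤ Module.finrank (ZMod 2) ↥(LinearMap.ker μ) := by
    have hne : (⟨⟨a, ha⟩, hμa⟩ : ↥(LinearMap.ker μ)) ≠ 0 := by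
      intro h
      apply hane
      exact Subtype.ext_iff.mp (Subtype.ext_iff.mp h)
    haveI : Nontrivial ↥(LinearMap.ker μ) := nontrivial_of_ne _ 0 hne
    exact Module.finrank_pos_iff.mpr inferInstance
  have hrn1 : Module.finrank (ZMod 2) ↥(LinearMap.range μ)
      + Module.finrank (ZMod 2) ↥(LinearMap.ker μ)
      = Module.finrank (ZMod 2) ↥(G 1) := LinearMap.finrank_range_add_finrank_ker μ
  -- complement projection onto G 2
  have hcompl : IsCompl (G 2) (⨆ i, ⨆ _ : i ≠ 2, G i) := by
    constructor
    · exact hindep 2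
    · rw [codisjoint_iff]
      rw [← top_le_iff, ← hsup]
      refine iSup_le fun i => ?_
      by_cases h : i = 2
      · subst h; exact le_sup_left
      · exact le_trans (le_iSup₂ (f := fun i (_ : i ≠ 2) => G i) i h) le_sup_right
  set π2 : A →ₗ[ZMod 2] ↥(G 2) := Submodule.linearProjOfIsCompl _ _ hcompl with hπ2def
  have hπ2_zero : ∀ i, i ≠ 2 → ∀ x ∈ G i, π2 x = 0 := by
    intro i hi x hx
    exact Submodule.linearProjOfIsCompl_apply_right' hcompl (x := x) (le_iSup₂ (f := fun i _ => G i) i hi hx)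
  have hπ2_eq : ∀ (y : ↥(G 2)), π2 y = y := fun y =>
    Submodule.linearProjOfIsCompl_apply_left hcompl y
  -- restriction maps on duals
  set ρ : ↥(dualGrade G 2) →ₗ[ZMod 2] Module.Dual (ZMod 2) ↥(G 2) :=
    ((G 2).subtype.dualMap).comp (dualGrade G 2).subtype with hρdef
  have hρsurj : Function.Surjective ρ := by
    intro g
    have hmem : g.comp π2 ∈ dualGrade G 2 := by
      rw [mem_dualGrade']
      intro i hi x hx
      simp [hπ2_zero i hi x hx]
    refine ⟨⟨g.comp π2, hmem⟩, ?_⟩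
    ext y
    exact congrArg g (hπ2_eq y)
  have hd2 : Module.finrank (ZMod 2) ↥(G 2) ≤ Module.finrank (ZMod 2) ↥(dualGrade G 2) := by
    have h1 := LinearMap.finrank_range_le ρ
    rw [LinearMap.range_eq_top.mpr hρsurj, finrank_top, Subspace.dual_finrank_eq] at h1
    exact h1
  set R : ↥(dualGrade G 2) →ₗ[ZMod 2] Module.Dual (ZMod 2) ↥(LinearMap.range μ) :=
    ((LinearMap.range μ).subtype.dualMap).comp (dualGrade G 2).subtype with hRdef
  have hrnR : Module.finrank (ZMod 2) ↥(LinearMap.range R)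
      + Module.finrank (ZMod 2) ↥(LinearMap.ker R)
      = Module.finrank (ZMod 2) ↥(dualGrade G 2) := LinearMap.finrank_range_add_finrank_ker R
  have hRle : Module.finrank (ZMod 2) ↥(LinearMap.range R)
      ≤ Module.finrank (ZMod 2) ↥(LinearMap.range μ) := by
    have h1 := Submodule.finrank_le (LinearMap.range R)
    rwa [Subspace.dual_finrank_eq] at h1
  -- kernel elements of R kill multiplication by a
  have hkerR : ∀ f : ↥(dualGrade G 2), f ∈ LinearMap.ker R →
      ∀ z : A, (f : Module.Dual (ZMod 2) A) (z * a) = 0 := by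
    intro f hf z
    have hz : z ∈ ⨆ i, G i := by rw [hsup]; trivial
    refine Submodule.iSup_induction (motive := fun z => (f : Module.Dual (ZMod 2) A) (z * a) = 0)
      G hz ?_ ?_ ?_
    · intro i x hx
      show (f : Module.Dual (ZMod 2) A) (x * a) = 0
      rcases Nat.lt_or_ge i 2 with h | h
      · interval_cases i
        · exact mem_dualGrade'.mp f.2 1 (by omega) _ (hmul 0 1 (by omega) x hx a ha)
        · have hmem : x * a ∈ LinearMap.range μ := ⟨⟨x, hx⟩, rfl⟩
          have h0 : R f = 0 := hf
          have h1 := congrArg (fun g => g (⟨x * a, hmem⟩ : ↥(LinearMap.range μ))) h0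
          simpa [hRdef] using h1
      · rw [hmulzero i 1 (by omega) x hx a ha, map_zero]
    · show (f : Module.Dual (ZMod 2) A) ((0 : A) * a) = 0
      rw [zero_mul, map_zero]
    · intro u v hu hv
      show (f : Module.Dual (ZMod 2) A) ((u + v) * a) = 0
      rw [add_mul, map_add, hu, hv, add_zero]
  -- theta is annihilated by rMul theta
  have hθθ : rMul (a, b) (a, b) = 0 := by
    refine Prod.ext ?_ ?_
    · exact ha2
    · show dAct a b + dAct a b = 0
      ext z
      exact hz2 _
  -- the injection into the kernel
  set K : Submodule (ZMod 2) (A × Module.Dual (ZMod 2) A) :=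
    doubleGrade G 1 ⊓ LinearMap.ker (rMul (a, b)) with hKdef
  set inc : ↥(LinearMap.ker R) →ₗ[ZMod 2] Module.Dual (ZMod 2) A :=
    (dualGrade G 2).subtype.comp (LinearMap.ker R).subtype with hincdef
  set T0 : (ZMod 2 × ↥(LinearMap.ker R)) →ₗ[ZMod 2] (A × Module.Dual (ZMod 2) A) :=
    (LinearMap.toSpanSingleton (ZMod 2) _ ((a, b) : A × Module.Dual (ZMod 2) A)).comp
        (LinearMap.fst _ _ _)
      + ((LinearMap.inr (ZMod 2) A _).comp inc).comp (LinearMap.snd _ _ _) with hT0def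
  have hT0_apply : ∀ (c : ZMod 2) (f : ↥(LinearMap.ker R)),
      T0 (c, f) = c • ((a, b) : A × Module.Dual (ZMod 2) A)
        + ((0 : A), ((f : ↥(dualGrade G 2)) : Module.Dual (ZMod 2) A)) := by
    intro c f
    rfl
  have hθmem : ((a, b) : A × Module.Dual (ZMod 2) A) ∈ doubleGrade G 1 := by
    rw [doubleGrade, Submodule.mem_prod]
    exact ⟨ha, hb⟩
  have hT0mem : ∀ p, T0 p ∈ K := by
    rintro ⟨c, f⟩
    rw [hT0_apply]
    constructor
    · refine Submodule.add_mem _ (Submodule.smul_mem _ _ hθmem) ?_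
      rw [doubleGrade, Submodule.mem_prod]
      exact ⟨Submodule.zero_mem _, (f : ↥(dualGrade G 2)).2⟩
    · show rMul (a, b) (c • ((a, b) : A × Module.Dual (ZMod 2) A)
          + ((0 : A), ((f : ↥(dualGrade G 2)) : Module.Dual (ZMod 2) A))) = 0
      rw [map_add, map_smul, hθθ, smul_zero, zero_add]
      refine Prod.ext ?_ ?_
      · show (0 : A) * a = 0
        rw [zero_mul]
      · show dAct 0 b + dAct a ((f : ↥(dualGrade G 2)) : Module.Dual (ZMod 2) A) = 0
        ext z
        simp only [LinearMap.add_apply, dAct_apply', LinearMap.zero_apply]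
        rw [mul_zero, map_zero, zero_add]
        exact hkerR f.1 f.2 z
  have hT0inj : ∀ p, T0 p = 0 → p = 0 := by
    rintro ⟨c, f⟩ h
    rw [hT0_apply] at h
    have h1 : c • a + 0 = 0 := congrArg Prod.fst h
    rw [add_zero] at h1
    have hc : c = 0 := by
      by_contra hc
      rw [hz1 c hc, one_smul] at h1
      exact hane h1
    subst hc
    have h2 := congrArg Prod.snd h
    simp only [zero_smul, zero_add] at h2
    have hf : f = 0 := by
      apply Subtype.ext
      apply Subtype.ext
      exact h2
    rw [hf]
    rfl
  set T : (ZMod 2 × ↥(LinearMap.ker R)) →ₗ[ZMod 2] ↥K := T0.codRestrict K hT0mem with hTdef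
  have hTinj : Function.Injective T := by
    rw [← LinearMap.ker_eq_bot, LinearMap.ker_eq_bot']
    intro p hp
    apply hT0inj
    have := congrArg (Submodule.subtype K) hp
    simpa [hTdef] using this
  have hK : 1 + Module.finrank (ZMod 2) ↥(LinearMap.ker R)
      ≤ Module.finrank (ZMod 2) ↥K := by
    have h1 := LinearMap.finrank_le_finrank_of_injective hTinj
    rwa [Module.finrank_prod, Module.finrank_self] at h1
  -- the image bound
  have himg : Module.finrank (ZMod 2) ↥((doubleGrade G 0).map (rMul (a, b))) ≤ 1 := by
    have h0 : doubleGrade G 0 ≤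
        Submodule.span (ZMod 2) {((1 : A), (0 : Module.Dual (ZMod 2) A))} := by
      rintro ⟨x, f⟩ hxf
      rw [doubleGrade, Submodule.mem_prod] at hxf
      obtain ⟨hx, hf⟩ := hxf
      have hf0 : f = 0 := by
        ext z
        have hz : z ∈ ⨆ i, G i := by rw [hsup]; trivial
        refine Submodule.iSup_induction (motive := fun z => f z = 0) G hz ?_ (map_zero f) ?_
        · intro i x hx
          show f x = 0
          by_cases hi : i = 3
          · subst hi
            rw [hbot 3 (by omega), Submodule.mem_bot] at hx
            rw [hx, map_zero]
          · exact mem_dualGrade'.mp hf i hi x hx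
        · intro u v hu hv
          show f (u + v) = 0
          rw [map_add, hu, hv, add_zero]
      rw [hG0, Submodule.mem_span_singleton] at hx
      obtain ⟨c, hc⟩ := hx
      rw [Submodule.mem_span_singleton]
      refine ⟨c, ?_⟩
      refine Prod.ext ?_ ?_
      · exact hc
      · simp [hf0]
    calc Module.finrank (ZMod 2) ↥((doubleGrade G 0).map (rMul (a, b)))
        ≤ Module.finrank (ZMod 2) ↥(doubleGrade G 0) :=
          Submodule.finrank_map_le _ _
      _ ≤ Module.finrank (ZMod 2)
            ↥(Submodule.span (ZMod 2) {((1 : A), (0 : Module.Dual (ZMod 2) A))}) :=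
          Submodule.finrank_mono h0
      _ = 1 := finrank_span_singleton (by
          intro h
          exact one_ne_zero (congrArg Prod.fst h))
  omega



end
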